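/- For the polytropic equation of state P(ρ) = Kρ^γ with γ > 1, the support radius and mass of the non-rotating star with center density μ satisfy the scaling relations R_μ = C₂ μ^{(γ-2)/2} and M(μ) = C₁ μ^{(3γ-4)/2} for positive constants C₁, C₂ depending only on γ and K. Consequently M(μ)/R_μ = (C₁/C₂) μ^{γ-1} is strictly increasing in μ; moreover M'(μ) > 0 if γ > 4/3 and M'(μ) < 0 if 1 < γ < 4/3. -/

import Mathlib

open Set

/-- For the polytropic equation of state `P(ρ) = Kρ^γ` with `γ > 1`,
the steady star with center density `μ` is obtained from the Lane–Emden function `θ` of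
index `n = 1/(γ-1)` (assumed to have finite support radius `R₀`) via the scaling
`y_μ(r) = α θ(α^{(n-1)/2} r)`, `α = (Kγ/(γ-1)) μ^{γ-1}`, `ρ = ((γ-1)y/(Kγ))^n`. Then
the support radius and total mass satisfy `R_μ = C₂ μ^{(γ-2)/2}` and
`M(μ) = C₁ μ^{(3γ-4)/2}` for positive constants `C₁, C₂`; consequently `M(μ)/R_μ` is
strictly increasing in `μ`, `M` is strictly increasing when `γ > 4/3` and strictly
decreasing when `1 < γ < 4/3`. -/
theorem polytrope_mass_radius_scaling
    (γ K : ℝ) (hγ : 1 < γ) (hK : 0 < K)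
    (θ : ℝ → ℝ) (R₀ : ℝ) (hR₀ : 0 < R₀)
    (hθ0 : θ 0 = 1) (hθpos : ∀ s ∈ Ico 0 R₀, 0 < θ s) (hθR₀ : θ R₀ = 0)
    (hθcont : ContinuousOn θ (Icc 0 R₀))
    (Rfun Mfun : ℝ → ℝ)
    (hRfun : ∀ μ > (0 : ℝ),
      Rfun μ = (K * γ / (γ - 1) * μ ^ (γ - 1)) ^ (-((1 / (γ - 1) - 1) / 2)) * R₀)
    (hMfun : ∀ μ > (0 : ℝ),
      Mfun μ = 4 * Real.pi * ∫ r in (0 : ℝ)..Rfun μ,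
        ((γ - 1) / (K * γ) * ((K * γ / (γ - 1) * μ ^ (γ - 1)) *
          θ ((K * γ / (γ - 1) * μ ^ (γ - 1)) ^ ((1 / (γ - 1) - 1) / 2) * r))) ^ (1 / (γ - 1))
          * r ^ 2) :
    ∃ C₁ C₂ : ℝ, 0 < C₁ ∧ 0 < C₂ ∧
      (∀ μ > (0 : ℝ), Rfun μ = C₂ * μ ^ ((γ - 2) / 2) ∧
        Mfun μ = C₁ * μ ^ ((3 * γ - 4) / 2)) ∧
      StrictMonoOn (fun μ => Mfun μ / Rfun μ) (Ioi 0) ∧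
      (4 / 3 < γ → StrictMonoOn Mfun (Ioi 0)) ∧
      (γ < 4 / 3 → StrictAntiOn Mfun (Ioi 0)) := by
  have hγ1 : (0 : ℝ) < γ - 1 := by linarith
  have hγ0 : (0 : ℝ) < γ := by linarith
  set A : ℝ := K * γ / (γ - 1) with hA_def
  have hA : 0 < A := div_pos (mul_pos hK hγ0) hγ1
  set n : ℝ := 1 / (γ - 1) with hn_def
  have hn : 0 < n := one_div_pos.mpr hγ1
  set β : ℝ := (n - 1) / 2 with hβ_def
  -- nonnegativity of θ on [0, R₀]
  have hθnn : ∀ s ∈ Icc (0 : ℝ) R₀, 0 ≤ θ s := by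
    intro s hs
    rcases eq_or_lt_of_le hs.2 with h | h
    · simp [h, hθR₀]
    · exact (hθpos s ⟨hs.1, h⟩).le
  -- the Lane–Emden integral
  set I : ℝ := ∫ s in (0 : ℝ)..R₀, θ s ^ n * s ^ 2 with hI_def
  have hfcont : ContinuousOn (fun s => θ s ^ n * s ^ 2) (Icc 0 R₀) :=
    (hθcont.rpow_const fun x _ => Or.inr hn.le).mul ((continuous_pow 2).continuousOn)
  have hI : 0 < I := by
    refine intervalIntegral.intervalIntegral_pos_of_pos_on ?_ ?_ hR₀
    · apply ContinuousOn.intervalIntegrable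
      rwa [uIcc_of_le hR₀.le]
    · intro x hx
      exact mul_pos (Real.rpow_pos_of_pos (hθpos x ⟨hx.1.le, hx.2⟩) n)
        (pow_pos hx.1 2)
  -- the scaling laws
  have hscale : ∀ μ > (0 : ℝ),
      Rfun μ = A ^ (-β) * R₀ * μ ^ ((γ - 2) / 2) ∧
      Mfun μ = 4 * Real.pi * I * A ^ (-(3 * β)) * μ ^ ((3 * γ - 4) / 2) := by
    intro μ hμ
    have hμγ : (0 : ℝ) < μ ^ (γ - 1) := Real.rpow_pos_of_pos hμ _
    set α : ℝ := A * μ ^ (γ - 1) with hα_def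
    have hα : 0 < α := mul_pos hA hμγ
    have hβγ : (γ - 1) * (-β) = (γ - 2) / 2 := by
      rw [hβ_def, hn_def]; field_simp; ring
    have hRμ : Rfun μ = A ^ (-β) * R₀ * μ ^ ((γ - 2) / 2) := by
      rw [hRfun μ hμ, Real.mul_rpow hA.le hμγ.le, ← Real.rpow_mul hμ.le, hβγ]
      ring
    refine ⟨hRμ, ?_⟩
    -- mass computation: change of variables s = α^β r
    set c : ℝ := α ^ β with hc_def
    have hc : 0 < c := Real.rpow_pos_of_pos hα β
    set g : ℝ → ℝ := fun s => (μ ^ (γ - 1) * θ s) ^ n * (c⁻¹ * s) ^ 2 with hg_def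
    have hcR : c * Rfun μ = R₀ := by
      rw [hRfun μ hμ, ← hα_def, hc_def, ← mul_assoc,
        ← Real.rpow_add hα, add_neg_cancel, Real.rpow_zero, one_mul]
    have hμn : (μ ^ (γ - 1)) ^ n = μ := by
      rw [← Real.rpow_mul hμ.le, hn_def, mul_one_div, div_self hγ1.ne',
        Real.rpow_one]
    have hstep1 : Mfun μ = 4 * Real.pi * (c⁻¹ * ∫ s in (0 : ℝ)..R₀, g s) := by
      rw [hMfun μ hμ]
      congr 1
      have : (∫ r in (0 : ℝ)..Rfun μ,
          ((γ - 1) / (K * γ) * ((K * γ / (γ - 1) * μ ^ (γ - 1)) *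
            θ ((K * γ / (γ - 1) * μ ^ (γ - 1)) ^ ((1 / (γ - 1) - 1) / 2) * r))) ^ (1 / (γ - 1))
            * r ^ 2) = ∫ r in (0 : ℝ)..Rfun μ, g (c * r) := by
        apply intervalIntegral.integral_congr
        intro r _
        have h1 : (γ - 1) / (K * γ) * (α * θ (c * r))
            = μ ^ (γ - 1) * θ (c * r) := by
          rw [hα_def, hA_def]; field_simp
        have h2 : c⁻¹ * (c * r) = r := by
          field_simp
        simp only [← hA_def, ← hn_def, ← hβ_def, ← hα_def, ← hc_def, hg_def, h1, h2]
      rw [this, intervalIntegral.integral_comp_mul_left g hc.ne', mul_zero, hcR,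
        smul_eq_mul]
    have hstep2 : (∫ s in (0 : ℝ)..R₀, g s) = μ * c⁻¹ ^ 2 * I := by
      have : (∫ s in (0 : ℝ)..R₀, g s)
          = ∫ s in (0 : ℝ)..R₀, μ * c⁻¹ ^ 2 * (θ s ^ n * s ^ 2) := by
        apply intervalIntegral.integral_congr
        intro s hs
        rw [uIcc_of_le hR₀.le] at hs
        simp only [hg_def]
        rw [Real.mul_rpow hμγ.le (hθnn s hs), hμn, mul_pow]
        ring
      rw [this, intervalIntegral.integral_const_mul, ← hI_def]
    rw [hstep1, hstep2]
    -- now algebra of rpow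
    have hcinv : c⁻¹ = α ^ (-β) := by
      rw [hc_def, ← Real.rpow_neg hα.le]
    have hc3 : c⁻¹ * c⁻¹ ^ 2 = α ^ (-(3 * β)) := by
      rw [hcinv, sq, ← Real.rpow_add hα, ← Real.rpow_add hα]
      ring_nf
    have hα3 : α ^ (-(3 * β)) = A ^ (-(3 * β)) * μ ^ (3 * ((γ - 2) / 2)) := by
      rw [hα_def, Real.mul_rpow hA.le hμγ.le, ← Real.rpow_mul hμ.le]
      congr 2
      simp only [hβ_def, hn_def]; field_simp; ring
    have hμfin : μ * μ ^ (3 * ((γ - 2) / 2)) = μ ^ ((3 * γ - 4) / 2) := by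
      nth_rewrite 1 [← Real.rpow_one μ]
      rw [← Real.rpow_add hμ]
      congr 1; ring
    calc 4 * Real.pi * (c⁻¹ * (μ * c⁻¹ ^ 2 * I))
        = 4 * Real.pi * I * (c⁻¹ * c⁻¹ ^ 2) * μ := by ring
      _ = 4 * Real.pi * I * A ^ (-(3 * β)) * μ ^ ((3 * γ - 4) / 2) := by
          rw [hc3, hα3, ← hμfin]; ring
  refine ⟨4 * Real.pi * I * A ^ (-(3 * β)), A ^ (-β) * R₀,
    by positivity, by positivity, fun μ hμ => ⟨(hscale μ hμ).1, (hscale μ hμ).2⟩,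
    ?_, ?_, ?_⟩
  · -- M/R strictly increasing
    intro a ha b hb hab
    simp only [mem_Ioi] at ha hb
    have hRa := (hscale a ha).1
    have hRb := (hscale b hb).1
    have hMa := (hscale a ha).2
    have hMb := (hscale b hb).2
    have key : ∀ μ > (0 : ℝ), Mfun μ / Rfun μ =
        (4 * Real.pi * I * A ^ (-(3 * β)) / (A ^ (-β) * R₀)) * μ ^ (γ - 1) := by
      intro μ hμ
      rw [(hscale μ hμ).1, (hscale μ hμ).2,
        show (γ - 1 : ℝ) = (3 * γ - 4) / 2 - (γ - 2) / 2 by ring,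
        Real.rpow_sub hμ]
      field_simp
    simp only [key a ha, key b hb]
    have hCpos : 0 < 4 * Real.pi * I * A ^ (-(3 * β)) / (A ^ (-β) * R₀) := by
      positivity
    exact mul_lt_mul_of_pos_left (Real.rpow_lt_rpow ha.le hab (by linarith)) hCpos
  · -- M strictly increasing for γ > 4/3
    intro hγ43 a ha b hb hab
    simp only [mem_Ioi] at ha hb
    rw [(hscale a ha).2, (hscale b hb).2]
    exact mul_lt_mul_of_pos_left (Real.rpow_lt_rpow ha.le hab (by linarith))
      (by positivity)
  · -- M strictly decreasing for γ < 4/3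
    intro hγ43 a ha b hb hab
    simp only [mem_Ioi] at ha hb
    rw [(hscale a ha).2, (hscale b hb).2]
    exact mul_lt_mul_of_pos_left (Real.rpow_lt_rpow_of_neg ha hab (by linarith))
      (by positivity)
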